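/- For all integers m and n, with x = 4(7n^2-8mn-16m^2)(13n^2+24mn+16m^2)(17n^2+40mn+16m^2), c1 = (17n^2+40mn+16m^2)(19n^2+56mn+48m^2)(33n^2+40mn+16m^2), and d1 = (17n^2+40mn+16m^2)(725n^4+2384mn^3+3808m^2n^2+3328m^3n+1280m^4), the identity x^2 + c1^2 = d1^2 holds. -/
import Mathlib


theorem stmt_13 (m n x c1 d1 : ℤ)
    (hx : x = 4*(7*n^2-8*m*n-16*m^2)*(13*n^2+24*m*n+16*m^2)*(17*n^2+40*m*n+16*m^2))
    (hc1 : c1 = (17*n^2+40*m*n+16*m^2)*(19*n^2+56*m*n+48*m^2)*(33*n^2+40*m*n+16*m^2))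
    (hd1 : d1 = (17*n^2+40*m*n+16*m^2)*(725*n^4+2384*m*n^3+3808*m^2*n^2+3328*m^3*n+1280*m^4)) :
    x^2 + c1^2 = d1^2 := by subst hx hc1 hd1; ring
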